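/- Let X be a nonempty set, p a partial metric on X, and {x_n}, {y_n} two sequences in X such that p(x_n, y_n) → 0 as n → ∞. If {y_n} is rough statistically convergent to y with roughness degree r ≥ 0 and the self-distances satisfy p(y_n, y_n) → 0 as n → ∞, then {x_n} is rough statistically convergent to y with the same roughness degree r. -/

import Mathlib

/-- A partial metric on a set `X`. -/
structure IsPartialMetric {X : Type*} (p : X → X → ℝ) : Prop where
  nonneg : ∀ x y : X, 0 ≤ p x y
  self_le : ∀ x y : X, p x x ≤ p x y
  eq_iff : ∀ x y : X, x = y ↔ p x x = p x y ∧ p x y = p y y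
  symm : ∀ x y : X, p x y = p y x
  triangle : ∀ x y z : X, p x y ≤ p x z + p z y - p z z

open Classical in
/-- `A ⊆ ℕ` has natural density `d`. -/
def HasNatDensity (A : Set ℕ) (d : ℝ) : Prop :=
  Filter.Tendsto
    (fun n : ℕ => (((Finset.range n).filter (fun k => k ∈ A)).card : ℝ) / (n : ℝ))
    Filter.atTop (nhds d)

/-- `l` is a rough statistical limit point of the sequence `x` with roughness degree `r`,
i.e. `l ∈ st-LIM^r x_n`. -/
def RStatLimit {X : Type*} (p : X → X → ℝ) (x : ℕ → X) (r : ℝ) (l : X) : Prop :=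
  ∀ ε : ℝ, 0 < ε → HasNatDensity {n : ℕ | r + ε ≤ |p (x n) l - p l l|} 0

open Classical in
lemma hasNatDensity_zero_of_subset_union_finite {A S : Set ℕ} (N : ℕ)
    (hsub : ∀ n, n ∈ A → n ∈ S ∨ n < N) (hS : HasNatDensity S 0) :
    HasNatDensity A 0 := by
  unfold HasNatDensity at *
  apply squeeze_zero (g := fun n : ℕ =>
      (((Finset.range n).filter (fun k => k ∈ S)).card : ℝ) / n + (N : ℝ) / n)
  · intro n
    positivity
  · intro n
    rw [← add_div]
    gcongr
    · rw [← Nat.cast_add, Nat.cast_le]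
      have : (Finset.range n).filter (fun k => k ∈ A) ⊆
          ((Finset.range n).filter (fun k => k ∈ S)) ∪ Finset.range N := by
        intro k hk
        simp only [Finset.mem_filter, Finset.mem_range, Finset.mem_union] at hk ⊢
        rcases hsub k hk.2 with h | h
        · exact Or.inl ⟨hk.1, h⟩
        · exact Or.inr h
      calc ((Finset.range n).filter (fun k => k ∈ A)).card
          ≤ (((Finset.range n).filter (fun k => k ∈ S)) ∪ Finset.range N).card :=
            Finset.card_le_card this
        _ ≤ ((Finset.range n).filter (fun k => k ∈ S)).card + (Finset.range N).card :=
            Finset.card_union_le _ _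
        _ = ((Finset.range n).filter (fun k => k ∈ S)).card + N := by
            rw [Finset.card_range]
  · simpa using hS.add (tendsto_const_div_atTop_nhds_zero_nat (N : ℝ))

/-- If `p (x_n, y_n) → 0`, `y_n` is `r`-statistically convergent to `y`, and the
self-distances `p (y_n, y_n) → 0`, then `x_n` is `r`-statistically convergent to `y`. -/
theorem rStatLimit_transfer'
    {X : Type*} [Nonempty X] (p : X → X → ℝ) (hp : IsPartialMetric p)
    (x y : ℕ → X)
    (hxy : Filter.Tendsto (fun n : ℕ => p (x n) (y n)) Filter.atTop (nhds 0))
    (l : X) (r : ℝ) (hr : 0 ≤ r) (hy : RStatLimit p y r l)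
    (hselfy : Filter.Tendsto (fun n : ℕ => p (y n) (y n)) Filter.atTop (nhds 0)) :
    RStatLimit p x r l := by
  intro ε hε
  have hhalf : (0:ℝ) < ε / 2 := by linarith
  have hev : ∀ᶠ n in Filter.atTop, p (x n) (y n) < ε / 2 := by
    have := hxy.eventually (gt_mem_nhds hhalf)
    simpa using this
  obtain ⟨N, hN⟩ := Filter.eventually_atTop.mp hev
  apply hasNatDensity_zero_of_subset_union_finite N
    (S := {n : ℕ | r + ε/2 ≤ |p (y n) l - p l l|})
  · intro n hn
    by_cases hnN : n < N
    · exact Or.inr hnN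
    · left
      push_neg at hnN
      have hclose := hN n hnN
      -- |p (x n) l - p (y n) l| ≤ p (x n) (y n)
      have h1 : p (x n) l ≤ p (x n) (y n) + p (y n) l := by
        have := hp.triangle (x n) l (y n)
        have h0 := hp.nonneg (y n) (y n)
        linarith
      have h2 : p (y n) l ≤ p (x n) (y n) + p (x n) l := by
        have := hp.triangle (y n) l (x n)
        have h0 := hp.nonneg (x n) (x n)
        have hs := hp.symm (y n) (x n)
        linarith
      have hbound : |p (x n) l - p (y n) l| ≤ p (x n) (y n) := abs_le.2 ⟨by linarith, by linarith⟩
      have hn' : r + ε ≤ |p (x n) l - p l l| := hn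
      have habs : |p (x n) l - p l l| ≤ |p (y n) l - p l l| + |p (x n) l - p (y n) l| := by
        have h4 := abs_sub_abs_le_abs_sub (p (x n) l - p l l) (p (y n) l - p l l)
        have h3 : |p (x n) l - p l l - (p (y n) l - p l l)| = |p (x n) l - p (y n) l| := by
          ring_nf
        linarith
      show r + ε/2 ≤ |p (y n) l - p l l|
      linarith [abs_lt.mp (lt_of_le_of_lt hbound hclose)]
  · exact hy (ε/2) hhalf
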